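/- Let T be a bipartite graph with parts V_Q and V_S, maximum degree Δ, and let T̄ be the contracted graph on V_Q (two vertices adjacent iff they share a neighbor in V_S). For any subset L ⊆ V_Q, the boundary in T̄ satisfies |∂_{T̄} L| ≥ |∂_T (L ∪ N_T(L))| / Δ, where N_T(L) is the neighborhood of L in T. -/

import Mathlib

/-!
STATEMENT 1: For a bipartite graph `T` with parts `V_Q` and `V_S` and maximum degree `Δ`,
with contracted graph `T̄` on `V_Q` (two vertices adjacent iff they share a neighbor in `V_S`),
and any `L ⊆ V_Q`, we have `|∂_{T̄} L| ≥ |∂_T (L ∪ N_T(L))| / Δ`,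
where `N_T(L)` is the neighborhood of `L` in `T` and `∂_G A` is the set of edges of `G`
with exactly one endpoint in `A`.
-/

attribute [local instance] Classical.propDecidable

open Finset

/-- The contracted graph of a bipartite (Tanner) graph `T` on `V_Q ⊕ V_S`. -/
def contractedGraph {VQ VS : Type*} (T : SimpleGraph (VQ ⊕ VS)) : SimpleGraph VQ where
  Adj q q' := q ≠ q' ∧ ∃ s : VS, T.Adj (Sum.inl q) (Sum.inr s) ∧ T.Adj (Sum.inl q') (Sum.inr s)
  symm := by
    constructor
    rintro a b ⟨hne, s, h1, h2⟩
    exact ⟨hne.symm, s, h2, h1⟩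
  loopless := by
    constructor
    rintro a ⟨hne, -⟩
    exact hne rfl

/-- The set of edges of `G` with exactly one endpoint in `L`. -/
noncomputable def edgeBoundary {V : Type*} [Fintype V] (G : SimpleGraph V) (L : Finset V) :
    Finset (Sym2 V) :=
  Finset.univ.filter (fun e => e ∈ G.edgeSet ∧ ∃ a b, e = s(a, b) ∧ a ∈ L ∧ b ∉ L)

theorem stmt1 {VQ VS : Type*} [Fintype VQ] [Fintype VS]
    (T : SimpleGraph (VQ ⊕ VS))
    -- `T` is bipartite with parts `V_Q` and `V_S`
    (hbip : ∀ a b, T.Adj a b → a.isLeft = b.isRight)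
    -- `Δ` is the maximum degree of `T`
    (Δ : ℕ)
    (hΔ : ∀ v, (Finset.univ.filter (fun u => T.Adj v u)).card ≤ Δ)
    (hΔmax : ∃ v, (Finset.univ.filter (fun u => T.Adj v u)).card = Δ)
    (L : Finset VQ)
    -- `N_T(L)`, the neighborhood of `L` in `T` (a subset of `V_S`)
    (NL : Finset VS)
    (hNL : NL = Finset.univ.filter (fun s => ∃ q ∈ L, T.Adj (Sum.inl q) (Sum.inr s))) :
    ((edgeBoundary (contractedGraph T) L).card : ℝ) ≥
      ((edgeBoundary T (L.image Sum.inl ∪ NL.image Sum.inr)).card : ℝ) / (Δ : ℝ) := by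
  classical
  set S : Finset (VQ ⊕ VS) := L.image Sum.inl ∪ NL.image Sum.inr with hS
  set B := edgeBoundary T S with hBdef
  -- every boundary edge has the form s(inl q, inr s) with q ∉ L, s ∈ NL, T.Adj
  have key : ∀ e ∈ B, ∃ p : VQ × VS, p.1 ∉ L ∧ p.2 ∈ NL ∧
      T.Adj (Sum.inl p.1) (Sum.inr p.2) ∧ e = s(Sum.inl p.1, Sum.inr p.2) := by
    intro e he
    simp only [hBdef, edgeBoundary, Finset.mem_filter, Finset.mem_univ, true_and] at he
    obtain ⟨hedge, a, b, rfl, haS, hbS⟩ := he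
    have hadj : T.Adj a b := (SimpleGraph.mem_edgeSet T).mp hedge
    have hlr := hbip a b hadj
    have memS : ∀ q : VQ, (Sum.inl q : VQ ⊕ VS) ∈ S ↔ q ∈ L := by
      intro q; simp [hS]
    have memS' : ∀ s : VS, (Sum.inr s : VQ ⊕ VS) ∈ S ↔ s ∈ NL := by
      intro s; simp [hS]
    match a, b with
    | Sum.inl q, Sum.inr s =>
        exfalso
        have hq : q ∈ L := (memS q).mp haS
        have hs : s ∈ NL := by
          rw [hNL]; simp only [Finset.mem_filter, Finset.mem_univ, true_and]
          exact ⟨q, hq, hadj⟩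
        exact hbS ((memS' s).mpr hs)
    | Sum.inr s, Sum.inl q =>
        refine ⟨(q, s), fun h => hbS ((memS q).mpr h), (memS' s).mp haS, hadj.symm, ?_⟩
        exact Sym2.eq_swap
    | Sum.inl _, Sum.inl _ => simp at hlr
    | Sum.inr _, Sum.inr _ => simp at hlr
  rcases B.eq_empty_or_nonempty with hB | hB
  · rw [hB]
    simp only [Finset.card_empty, Nat.cast_zero, zero_div, ge_iff_le]
    positivity
  obtain ⟨e₀, he₀⟩ := hB
  obtain ⟨p₀, hp₀⟩ := key e₀ he₀
  haveI : Inhabited VQ := ⟨p₀.1⟩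
  haveI : Inhabited VS := ⟨p₀.2⟩
  -- choice of a neighbor in L for each s ∈ NL
  set c : VS → VQ := fun s =>
    if h : ∃ q ∈ L, T.Adj (Sum.inl q) (Sum.inr s) then h.choose else default with hc
  have hcspec : ∀ s ∈ NL, c s ∈ L ∧ T.Adj (Sum.inl (c s)) (Sum.inr s) := by
    intro s hs
    rw [hNL] at hs
    simp only [Finset.mem_filter, Finset.mem_univ, true_and] at hs
    rw [hc]
    simp only [dif_pos hs]
    exact ⟨hs.choose_spec.1, hs.choose_spec.2⟩
  set P : Sym2 (VQ ⊕ VS) → Prop := fun e => ∃ p : VQ × VS, p.1 ∉ L ∧ p.2 ∈ NL ∧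
      T.Adj (Sum.inl p.1) (Sum.inr p.2) ∧ e = s(Sum.inl p.1, Sum.inr p.2) with hP
  set f : Sym2 (VQ ⊕ VS) → Sym2 VQ := fun e =>
    if h : P e then s(c h.choose.2, h.choose.1) else s(default, default) with hf
  have hfval : ∀ (e : Sym2 (VQ ⊕ VS)) (h : P e),
      f e = s(c h.choose.2, h.choose.1) := by
    intro e h; rw [hf]; simp only [dif_pos h]
  -- Δ ≥ 1
  have hΔpos : 0 < Δ := by
    have h1 : 0 < (Finset.univ.filter (fun u => T.Adj (Sum.inl p₀.1) u)).card := by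
      rw [Finset.card_pos]
      exact ⟨Sum.inr p₀.2, by simp [hp₀.2.2.1]⟩
    exact lt_of_lt_of_le h1 (hΔ _)
  -- image of f on B lands in the contracted boundary
  have himg : B.image f ⊆ edgeBoundary (contractedGraph T) L := by
    intro d hd
    obtain ⟨e, he, rfl⟩ := Finset.mem_image.mp hd
    have hPe : P e := key e he
    obtain ⟨hq, hs, hadj, heq⟩ := hPe.choose_spec
    rw [hfval e hPe]
    obtain ⟨hcL, hcadj⟩ := hcspec _ hs
    have hne : c hPe.choose.2 ≠ hPe.choose.1 := fun h => hq (h ▸ hcL)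
    have hAdj : (contractedGraph T).Adj (c hPe.choose.2) hPe.choose.1 :=
      ⟨hne, hPe.choose.2, hcadj, hadj⟩
    simp only [edgeBoundary, Finset.mem_filter, Finset.mem_univ, true_and]
    exact ⟨(SimpleGraph.mem_edgeSet _).mpr hAdj,
      c hPe.choose.2, hPe.choose.1, rfl, hcL, hq⟩
  -- fibers have size at most Δ
  have hfiber : ∀ d ∈ B.image f, (B.filter (fun e => f e = d)).card ≤ Δ := by
    intro d hd
    obtain ⟨e₁, he₁, hfe₁⟩ := Finset.mem_image.mp hd
    have hPe₁ : P e₁ := key e₁ he₁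
    obtain ⟨hq₁, hs₁, hadj₁, heq₁⟩ := hPe₁.choose_spec
    set q₀ := hPe₁.choose.1 with hq₀
    -- for each fiber element, its q-component equals q₀
    have hfibq : ∀ e ∈ B.filter (fun e => f e = d), ∀ (h : P e),
        h.choose.1 = q₀ := by
      intro e he h
      obtain ⟨hq, hs, hadj, heq⟩ := h.choose_spec
      have hfe : f e = d := (Finset.mem_filter.mp he).2
      rw [hfval e h, ← hfe₁, hfval e₁ hPe₁] at hfe
      rcases Sym2.eq_iff.mp hfe with ⟨h1, h2⟩ | ⟨h1, h2⟩
      · exact h2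
      · exact absurd ((hcspec _ hs₁).1) (h2 ▸ hq)
    set g : Sym2 (VQ ⊕ VS) → (VQ ⊕ VS) := fun e =>
      if h : P e then Sum.inr h.choose.2 else Sum.inr default with hg
    have := Finset.card_le_card_of_injOn g
      (s := B.filter (fun e => f e = d))
      (t := Finset.univ.filter (fun u => T.Adj (Sum.inl q₀) u))
      (by
        intro e he
        have hPe : P e := key e (Finset.mem_filter.mp he).1
        obtain ⟨hq, hs, hadj, heq⟩ := hPe.choose_spec
        rw [hg]; simp only [dif_pos hPe]
        simp only [Finset.coe_filter, Finset.mem_coe, Set.mem_setOf_eq, Finset.mem_filter, Finset.mem_univ, true_and]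
        rw [← hfibq e he hPe]
        exact hadj)
      (by
        intro e1 he1 e2 he2 hgeq
        simp only [Finset.coe_filter, Set.mem_setOf_eq] at he1 he2
        have he1' : e1 ∈ B.filter (fun e => f e = d) := Finset.mem_filter.mpr ⟨he1.1, he1.2⟩
        have he2' : e2 ∈ B.filter (fun e => f e = d) := Finset.mem_filter.mpr ⟨he2.1, he2.2⟩
        have hP1 : P e1 := key e1 he1.1
        have hP2 : P e2 := key e2 he2.1
        rw [hg] at hgeq
        simp only [dif_pos hP1, dif_pos hP2] at hgeq
        have hseq : hP1.choose.2 = hP2.choose.2 := Sum.inr.injEq _ _ ▸ hgeq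
        have h1 := hP1.choose_spec.2.2.2
        have h2 := hP2.choose_spec.2.2.2
        rw [h1, h2, hfibq e1 he1' hP1, hfibq e2 he2' hP2, hseq])
    exact this.trans (hΔ _)
  have hmain : B.card ≤ Δ * (edgeBoundary (contractedGraph T) L).card := by
    calc B.card ≤ Δ * (B.image f).card := Finset.card_le_mul_card_image B Δ hfiber
    _ ≤ Δ * (edgeBoundary (contractedGraph T) L).card :=
        Nat.mul_le_mul_left Δ (Finset.card_le_card himg)
  rw [ge_iff_le, div_le_iff₀ (by exact_mod_cast hΔpos)]
  calc (B.card : ℝ) ≤ (Δ * (edgeBoundary (contractedGraph T) L).card : ℕ) := by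
        exact_mod_cast hmain
    _ = (edgeBoundary (contractedGraph T) L).card * Δ := by push_cast; ring
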